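/- arXiv:2005.07821 — 3 statements merged into one kernel-verified Lean document; each statement's English description precedes it below -/
import Mathlib

section
/- Let τ ∈ ℕ with τ ≥ 1 and let R be the τ×τ fundamental matrix of the CUSIGN Markov chain with p₊ = p₋ = 1/2. Then I_τ − R is invertible and the first component (index 0) of the vector μ = (I_τ − R)^{−1}·𝟙, where 𝟙 is the all-ones vector in ℝ^τ, equals τ(τ+1). Consequently the expected CUSIGN alarm rate E[α] = (μ_0)^{−1} equals 1/(τ(τ+1)); in particular E[α] = 1/2, 1/6, 1/12, 1/20 for τ = 1, 2, 3, 4 respectively. -/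
open Matrix

/-- The `τ × τ` fundamental matrix of the CUSIGN Markov chain (transient states only),
with up-probability `p₊ = p` and down-probability `p₋ = 1 - p`:
`R 0 0 = 1 - p`, `R i (i-1) = 1 - p`, `R i (i+1) = p`, all other entries `0`. -/
noncomputable def cusignR (p : ℝ) (τ : ℕ) : Matrix (Fin τ) (Fin τ) ℝ :=
  Matrix.of fun i j =>
    if (j : ℕ) + 1 = (i : ℕ) then 1 - p
    else if (i : ℕ) + 1 = (j : ℕ) then p
    else if (i : ℕ) = 0 ∧ (j : ℕ) = 0 then 1 - p
    else 0

noncomputable def cusignB (τ : ℕ) : Matrix (Fin τ) (Fin τ) ℝ :=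
  Matrix.of fun i j => 2 * ((τ : ℝ) - (max (i : ℕ) (j : ℕ) : ℕ))

lemma sum_point {τ : ℕ} (c : ℕ) (f : Fin τ → ℝ) :
    (∑ j : Fin τ, if (j : ℕ) = c then f j else 0)
      = if h : c < τ then f ⟨c, h⟩ else 0 := by
  split_ifs with h
  · have hrw : ∀ j : Fin τ, ((j : ℕ) = c) = (j = ⟨c, h⟩) := by
      intro j; simp [Fin.ext_iff]
    simp_rw [hrw]; simp
  · apply Finset.sum_eq_zero
    intro j _
    rw [if_neg]
    have := j.isLt; omega

lemma max_cast (a b : ℕ) :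
    ((max a b : ℕ) : ℝ) = if a ≤ b then (b : ℝ) else (a : ℝ) := by
  rw [Nat.max_def]; split_ifs <;> rfl

lemma cusign_mul_B (τ : ℕ) : (1 - cusignR (1/2) τ) * cusignB τ = 1 := by
  ext i k
  rw [Matrix.sub_mul, Matrix.one_mul, Matrix.sub_apply, Matrix.mul_apply, Matrix.one_apply]
  obtain ⟨K, hK⟩ := k
  obtain ⟨iv, hiv⟩ := i
  match iv, hiv with
  | 0, hiv =>
    have hs : ∀ j : Fin τ, cusignR (1/2) τ ⟨0, hiv⟩ j * cusignB τ j ⟨K, hK⟩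
        = (if (j : ℕ) = 1 then (1/2) * cusignB τ j ⟨K, hK⟩ else 0)
          + (if (j : ℕ) = 0 then (1/2) * cusignB τ j ⟨K, hK⟩ else 0) := by
      intro j
      obtain ⟨jv, hjv⟩ := j
      simp only [cusignR, Matrix.of_apply, Fin.val_mk]
      split_ifs <;>
        first
        | (exfalso; omega)
        | ring1
        | (exfalso; tauto)
    rw [Finset.sum_congr rfl (fun j _ => hs j), Finset.sum_add_distrib, sum_point, sum_point]
    simp only [cusignB, Matrix.of_apply, Fin.val_mk, Fin.mk.injEq, max_cast]
    split_ifs <;>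
      first
      | (exfalso; omega)
      | (push_cast; ring1)
      | (have h' : K = 0 := by omega
         subst h'; push_cast; ring1)
      | (have h' : K = 1 := by omega
         subst h'; push_cast; ring1)
      | (have h' : τ = 1 := by omega
         subst h'
         have h'' : K = 0 := by omega
         subst h''; push_cast; ring1)
  | n + 1, hiv =>
    have hs : ∀ j : Fin τ, cusignR (1/2) τ ⟨n + 1, hiv⟩ j * cusignB τ j ⟨K, hK⟩
        = (if (j : ℕ) = n then (1/2) * cusignB τ j ⟨K, hK⟩ else 0)
          + (if (j : ℕ) = n + 2 then (1/2) * cusignB τ j ⟨K, hK⟩ else 0) := by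
      intro j
      obtain ⟨jv, hjv⟩ := j
      simp only [cusignR, Matrix.of_apply, Fin.val_mk]
      split_ifs <;>
        first
        | (exfalso; omega)
        | ring1
        | (exfalso; tauto)
    rw [Finset.sum_congr rfl (fun j _ => hs j), Finset.sum_add_distrib, sum_point, sum_point]
    simp only [cusignB, Matrix.of_apply, Fin.val_mk, Fin.mk.injEq, max_cast]
    split_ifs <;>
      first
      | (exfalso; omega)
      | (push_cast; ring1)
      | (have h' : K = n := by omega
         subst h'; push_cast; ring1)
      | (have h' : K = n + 1 := by omega
         subst h'; push_cast; ring1)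
      | (have h' : τ = n + 2 := by omega
         subst h'; push_cast; ring1)
      | (have h' : τ = n + 2 := by omega
         subst h'
         first
         | (have h'' : K = n + 1 := by omega
            subst h''; push_cast; ring1)
         | (have h'' : K = n := by omega
            subst h''; push_cast; ring1))

/-- For `p₊ = p₋ = 1/2`, `I - R` is invertible, the first component of
`μ = (I - R)⁻¹ · 𝟙` equals `τ (τ + 1)`, and hence the expected alarm rate
`E[α] = μ₀⁻¹` equals `1 / (τ (τ + 1))`. -/
theorem cusign_expected_alarm_rate (τ : ℕ) (hτ : 1 ≤ τ) :
    IsUnit (1 - cusignR (1/2) τ) ∧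
    ((1 - cusignR (1/2) τ)⁻¹ *ᵥ (fun _ => (1 : ℝ))) ⟨0, hτ⟩ = (τ : ℝ) * (τ + 1) ∧
    (((1 - cusignR (1/2) τ)⁻¹ *ᵥ (fun _ => (1 : ℝ))) ⟨0, hτ⟩)⁻¹
      = 1 / ((τ : ℝ) * (τ + 1)) := by
  have hmul := cusign_mul_B τ
  have hunit : IsUnit (1 - cusignR (1/2) τ) := (Matrix.isUnit_iff_isUnit_det _).2 (Matrix.isUnit_det_of_right_inverse hmul)
  have hmu : ((1 - cusignR (1/2) τ)⁻¹ *ᵥ (fun _ => (1 : ℝ))) ⟨0, hτ⟩ = (τ : ℝ) * (τ + 1) := by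
    rw [Matrix.inv_eq_right_inv hmul]
    simp only [Matrix.mulVec, dotProduct, mul_one, cusignB, Matrix.of_apply, Fin.val_mk,
      Nat.zero_max]
    rw [Fin.sum_univ_eq_sum_range (fun n => 2 * ((τ : ℝ) - (n : ℝ))) τ]
    have g : (∑ i ∈ Finset.range τ, (i : ℝ)) = ((τ : ℝ) * ((τ : ℝ) - 1)) / 2 := by
      have h := congrArg (Nat.cast : ℕ → ℝ) (Finset.sum_range_id_mul_two τ)
      push_cast [Nat.cast_sub hτ] at h
      linarith
    simp only [mul_sub]
    rw [Finset.sum_sub_distrib, Finset.sum_const, Finset.card_range, ← Finset.mul_sum]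
    rw [nsmul_eq_mul, g]
    ring
  exact ⟨hunit, hmu, by rw [hmu, one_div]⟩
end

section
/- On a probability space let (ε_k)_{k≥1} be an i.i.d. sequence of integer-valued random variables with P(ε_k = 1) = P(ε_k = −1) = 1/2. For threshold τ ≥ 1 define S_0 = 0, S_k = max(0, S_{k−1} + ε_k), and T = inf{k ≥ 1 : S_k = τ}. Then T is integrable and E[T] = τ(τ+1). -/
open MeasureTheory ProbabilityTheory
open scoped ENNReal
set_option linter.unusedSectionVars false
set_option maxHeartbeats 1000000

lemma enat_cast_eq_tsum' (a : ℕ∞) :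
    (a : ℝ≥0∞) = ∑' n : ℕ, (if (n:ℕ∞) < a then (1:ℝ≥0∞) else 0) := by
  cases a with
  | top =>
    simp only [lt_top_iff_ne_top, ENNReal.coe_lt_top, ne_eq]
    norm_num
  | coe m =>
    rw [tsum_eq_sum (s := Finset.range m) (by intro n hn; simp at hn ⊢; exact_mod_cast hn)]
    rw [Finset.sum_congr rfl (fun n hn => if_pos (by exact_mod_cast Finset.mem_range.mp hn))]
    simp

def goodE {Ω : Type*} (ε : ℕ → Ω → ℤ) : Set Ω := {ω | ∀ k, 1 ≤ k → ε k ω = 1 ∨ ε k ω = -1}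

def Aset {Ω : Type*} (S : ℕ → Ω → ℤ) (τ : ℕ) (n : ℕ) : Set Ω :=
  {ω | ∀ k, 1 ≤ k → k ≤ n → S k ω ≠ (τ : ℤ)}

open Classical in
noncomputable def Rst {Ω : Type*} (S : ℕ → Ω → ℤ) (τ : ℕ) (n : ℕ) (ω : Ω) : ℤ :=
  if ω ∈ Aset S τ n then min (S n ω) (τ:ℤ) else (τ:ℤ)

noncomputable def Fst {Ω : Type*} (S : ℕ → Ω → ℤ) (τ : ℕ) (n : ℕ) (ω : Ω) : ℝ :=
  ((Rst S τ n ω * (Rst S τ n ω + 1) : ℤ) : ℝ)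

def Gsig {Ω : Type*} [MeasurableSpace Ω] (ε : ℕ → Ω → ℤ) (n : ℕ) : MeasurableSpace Ω :=
  ⨆ k ∈ Set.Iic n, MeasurableSpace.comap (ε k) inferInstance

lemma Aset_antitone {Ω : Type*} {S : ℕ → Ω → ℤ} {τ : ℕ} {m n : ℕ} (h : m ≤ n) :
    Aset S τ n ⊆ Aset S τ m := by
  intro ω hω k hk1 hk2; exact hω k hk1 (hk2.trans h)

section Main
variable {Ω : Type*} [MeasureSpace Ω] [IsProbabilityMeasure (ℙ : Measure Ω)]
  {ε : ℕ → Ω → ℤ} {τ : ℕ} {S : ℕ → Ω → ℤ}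

lemma S_meas (hmeas : ∀ k, Measurable (ε k)) (hS0 : ∀ ω, S 0 ω = 0)
    (hS : ∀ k ω, S (k + 1) ω = max 0 (S k ω + ε (k + 1) ω)) (n : ℕ) :
    Measurable (S n) := by
  induction n with
  | zero => simp only [show S 0 = fun _ => (0:ℤ) from funext hS0]; exact measurable_const
  | succ k ih =>
    simp only [show S (k+1) = fun ω => max 0 (S k ω + ε (k+1) ω) from funext (hS k)]
    exact Measurable.max measurable_const (ih.add (hmeas (k+1)))

lemma S_nonneg (hS0 : ∀ ω, S 0 ω = 0)
    (hS : ∀ k ω, S (k + 1) ω = max 0 (S k ω + ε (k + 1) ω)) (n : ℕ) (ω : Ω) :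
    0 ≤ S n ω := by
  cases n with
  | zero => rw [hS0]
  | succ k => rw [hS]; exact le_max_left _ _

lemma Aset_meas (hmeas : ∀ k, Measurable (ε k)) (hS0 : ∀ ω, S 0 ω = 0)
    (hS : ∀ k ω, S (k + 1) ω = max 0 (S k ω + ε (k + 1) ω)) (n : ℕ) :
    MeasurableSet (Aset S τ n) := by
  have : Aset S τ n = ⋂ (k : ℕ), ⋂ (_ : 1 ≤ k), ⋂ (_ : k ≤ n), {ω | S k ω ≠ (τ:ℤ)} := by
    ext ω; simp [Aset]
  rw [this]
  exact MeasurableSet.iInter fun k => MeasurableSet.iInter fun _ => MeasurableSet.iInter fun _ =>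
    ((S_meas hmeas hS0 hS k) (measurableSet_singleton ((τ:ℤ)))).compl

lemma goodE_null (hmeas : ∀ k, Measurable (ε k))
    (hup : ∀ k, 1 ≤ k → ℙ {ω | ε k ω = 1} = ENNReal.ofReal (1/2))
    (hdown : ∀ k, 1 ≤ k → ℙ {ω | ε k ω = -1} = ENNReal.ofReal (1/2)) :
    ℙ (goodE ε)ᶜ = 0 := by
  have hsub : (goodE ε)ᶜ ⊆ ⋃ k : ℕ, {ω | 1 ≤ k ∧ ¬(ε k ω = 1 ∨ ε k ω = -1)} := by
    intro ω hω
    simp only [goodE, Set.mem_compl_iff, Set.mem_setOf_eq, not_forall] at hω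
    obtain ⟨k, hk1, hk2⟩ := hω
    exact Set.mem_iUnion.2 ⟨k, hk1, hk2⟩
  refine measure_mono_null hsub (measure_iUnion_null fun k => ?_)
  rcases Nat.eq_zero_or_pos k with rfl | hk
  · convert measure_empty (μ := (ℙ : Measure Ω)); ext ω; simp
  · have h1 : {ω | 1 ≤ k ∧ ¬(ε k ω = 1 ∨ ε k ω = -1)} = ({ω | ε k ω = 1} ∪ {ω | ε k ω = -1})ᶜ := by
      ext ω; simp [not_or]; tauto
    rw [h1]
    have hm1 : MeasurableSet {ω | ε k ω = 1} := (hmeas k) (measurableSet_singleton 1)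
    have hm2 : MeasurableSet {ω | ε k ω = -1} := (hmeas k) (measurableSet_singleton (-1))
    have hd : Disjoint {ω | ε k ω = 1} {ω | ε k ω = -1} := by
      rw [Set.disjoint_left]; intro ω h1 h2; simp at h1 h2; omega
    have : ℙ ({ω | ε k ω = 1} ∪ {ω | ε k ω = -1}) = 1 := by
      rw [measure_union hd hm2, hup k hk, hdown k hk]
      rw [← ENNReal.ofReal_add (by norm_num) (by norm_num)]; norm_num
    rw [measure_compl (hm1.union hm2) (measure_ne_top _ _), this, measure_univ, tsub_self]

lemma S_lt_good (hτ : 1 ≤ τ) (hS0 : ∀ ω, S 0 ω = 0)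
    (hS : ∀ k ω, S (k + 1) ω = max 0 (S k ω + ε (k + 1) ω))
    {ω : Ω} (hω : ω ∈ goodE ε) : ∀ n, ω ∈ Aset S τ n → S n ω < (τ:ℤ) := by
  intro n
  induction n with
  | zero => intro _; rw [hS0]; exact_mod_cast hτ
  | succ k ih =>
    intro hA
    have hAk : ω ∈ Aset S τ k := fun j hj1 hj2 => hA j hj1 (hj2.trans (Nat.le_succ k))
    have hlt : S k ω < τ := ih hAk
    have hne : S (k+1) ω ≠ (τ:ℤ) := hA (k+1) (Nat.succ_le_succ (Nat.zero_le k)) le_rfl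
    have hle : S (k+1) ω ≤ (τ:ℤ) := by
      rw [hS]
      rcases hω (k+1) (Nat.succ_le_succ (Nat.zero_le k)) with h | h <;> rw [h] <;>
        · simp only [max_le_iff]
          constructor
          · exact_mod_cast Nat.zero_le τ
          · omega
    exact lt_of_le_of_ne hle hne


lemma Gsig_le (hmeas : ∀ k, Measurable (ε k)) (n : ℕ) :
    Gsig ε n ≤ (inferInstance : MeasurableSpace Ω) :=
  iSup₂_le fun k _ => (hmeas k).comap_le

lemma eps_meas_G (n k : ℕ) (hk : k ≤ n) : Measurable[Gsig ε n] (ε k) := by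
  have h : MeasurableSpace.comap (ε k) inferInstance ≤ Gsig ε n := by
    exact le_iSup₂ (f := fun k (_ : k ∈ Set.Iic n) => MeasurableSpace.comap (ε k) inferInstance)
      k (Set.mem_Iic.mpr hk)
  exact (Measurable.of_comap_le le_rfl).mono h le_rfl

lemma S_meas_G (hS0 : ∀ ω, S 0 ω = 0)
    (hS : ∀ k ω, S (k + 1) ω = max 0 (S k ω + ε (k + 1) ω))
    (n : ℕ) : ∀ k, k ≤ n → Measurable[Gsig ε n] (S k) := by
  intro k
  induction k with
  | zero => intro _; simp only [show S 0 = fun _ => (0:ℤ) from funext hS0]; exact measurable_const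
  | succ j ih =>
    intro hk
    simp only [show S (j+1) = fun ω => max 0 (S j ω + ε (j+1) ω) from funext (hS j)]
    exact Measurable.max measurable_const
      ((ih (Nat.le_of_succ_le hk)).add (eps_meas_G n (j+1) hk))

lemma Aset_meas_G (hS0 : ∀ ω, S 0 ω = 0)
    (hS : ∀ k ω, S (k + 1) ω = max 0 (S k ω + ε (k + 1) ω)) (n : ℕ) :
    MeasurableSet[Gsig ε n] (Aset S τ n) := by
  have : Aset S τ n = ⋂ (k : ℕ), ⋂ (_ : 1 ≤ k), ⋂ (_ : k ≤ n), {ω | S k ω ≠ (τ:ℤ)} := by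
    ext ω; simp [Aset]
  rw [this]
  exact MeasurableSet.iInter fun k => MeasurableSet.iInter fun _ =>
    MeasurableSet.iInter fun hk =>
      ((S_meas_G hS0 hS n k hk) (measurableSet_singleton ((τ:ℤ)))).compl

lemma indep_G (hmeas : ∀ k, Measurable (ε k))
    (hindep : iIndepFun ε ℙ) (n : ℕ) :
    Indep (Gsig ε n) (MeasurableSpace.comap (ε (n+1)) inferInstance) ℙ := by
  have h := indep_iSup_of_disjoint (m := fun k => MeasurableSpace.comap (ε k) inferInstance)
    (fun i => (hmeas i).comap_le) ((iIndepFun_iff_iIndep _ _ _).mp hindep)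
    (S := Set.Iic n) (T := {n+1}) (by
      rw [Set.disjoint_left]; intro k hk hk'; simp at hk hk'; omega)
  rwa [iSup_singleton] at h



lemma integrable_of_bdd {f : Ω → ℝ} (hf : Measurable f) {C : ℝ} (h : ∀ ω, |f ω| ≤ C) :
    Integrable f ℙ :=
  ⟨hf.aestronglyMeasurable, HasFiniteIntegral.of_bounded (ae_of_all _ fun ω => by
    simpa using h ω)⟩

lemma Rst_bdd (hS0 : ∀ ω, S 0 ω = 0)
    (hS : ∀ k ω, S (k + 1) ω = max 0 (S k ω + ε (k + 1) ω)) :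
    ∀ (k : ℕ) (ω : Ω), 0 ≤ Rst S τ k ω ∧ Rst S τ k ω ≤ (τ:ℤ) := fun k ω => by
  rw [Rst]; split
  · exact ⟨le_min (S_nonneg hS0 hS k ω) (by positivity), min_le_right _ _⟩
  · exact ⟨by positivity, le_rfl⟩

lemma Fst_bdd (hS0 : ∀ ω, S 0 ω = 0)
    (hS : ∀ k ω, S (k + 1) ω = max 0 (S k ω + ε (k + 1) ω)) :
    ∀ (k : ℕ) (ω : Ω), 0 ≤ Fst S τ k ω ∧ Fst S τ k ω ≤ (τ:ℝ)*((τ:ℝ)+1) := fun k ω => by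
  obtain ⟨h1, h2⟩ := Rst_bdd hS0 hS k ω
  constructor
  · rw [Fst]; exact_mod_cast mul_nonneg h1 (by omega)
  · rw [Fst]
    have h3 : Rst S τ k ω * (Rst S τ k ω + 1) ≤ (τ:ℤ) * ((τ:ℤ)+1) :=
      mul_le_mul h2 (by omega) (by omega) (by positivity)
    exact_mod_cast h3

lemma Fst_meas (hmeas : ∀ k, Measurable (ε k)) (hS0 : ∀ ω, S 0 ω = 0)
    (hS : ∀ k ω, S (k + 1) ω = max 0 (S k ω + ε (k + 1) ω)) :
    ∀ k, Measurable (Fst S τ k) := fun k => by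
  have hRm : Measurable (Rst S τ k) :=
    Measurable.ite (Aset_meas hmeas hS0 hS k)
      ((S_meas hmeas hS0 hS k).min measurable_const) measurable_const
  exact measurable_from_top.comp (hRm.mul (hRm.add measurable_const))

lemma Fst_int (hmeas : ∀ k, Measurable (ε k)) (hS0 : ∀ ω, S 0 ω = 0)
    (hS : ∀ k ω, S (k + 1) ω = max 0 (S k ω + ε (k + 1) ω)) :
    ∀ k, Integrable (Fst S τ k) ℙ := fun k =>
  integrable_of_bdd (Fst_meas hmeas hS0 hS k) (C := (τ:ℝ)*((τ:ℝ)+1)) fun ω => by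
    have hC0 : (0:ℝ) ≤ (τ:ℝ)*((τ:ℝ)+1) := by positivity
    exact abs_le.mpr ⟨by linarith [(Fst_bdd (τ := τ) hS0 hS k ω).1], (Fst_bdd (τ := τ) hS0 hS k ω).2⟩


lemma key_step (hmeas : ∀ k, Measurable (ε k))
    (hindep : iIndepFun ε ℙ)
    (hup : ∀ k, 1 ≤ k → ℙ {ω | ε k ω = 1} = ENNReal.ofReal (1/2))
    (hdown : ∀ k, 1 ≤ k → ℙ {ω | ε k ω = -1} = ENNReal.ofReal (1/2))
    (hτ : 1 ≤ τ) (hS0 : ∀ ω, S 0 ω = 0)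
    (hS : ∀ k ω, S (k + 1) ω = max 0 (S k ω + ε (k + 1) ω)) (n : ℕ) :
    ∫ ω, Fst S τ (n+1) ω ∂ℙ = ∫ ω, Fst S τ n ω ∂ℙ + (ℙ (Aset S τ n)).toReal := by
  classical
  set A := Aset S τ n with hAdef
  set m : Ω → ℝ := fun ω => ((min (S n ω) (τ:ℤ) : ℤ) : ℝ) with hmdef
  set Xp : Ω → ℝ := A.indicator (fun ω => 2 * m ω + 2) with hXp
  set Xm : Ω → ℝ := A.indicator (fun ω => -2 * m ω) with hXm
  set Bp : Set Ω := ε (n+1) ⁻¹' {1} with hBp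
  set Bm : Set Ω := ε (n+1) ⁻¹' {-1} with hBm
  set Yp : Ω → ℝ := Bp.indicator (fun _ => (1:ℝ)) with hYp
  set Ym : Ω → ℝ := Bm.indicator (fun _ => (1:ℝ)) with hYm
  have hn1 : 1 ≤ n + 1 := Nat.succ_le_succ (Nat.zero_le n)
  -- pointwise identity on the good event
  have hptwise : ∀ ω ∈ goodE ε,
      Fst S τ (n+1) ω - Fst S τ n ω = Xp ω * Yp ω + Xm ω * Ym ω := by
    intro ω hω
    have hε : ε (n+1) ω = 1 ∨ ε (n+1) ω = -1 := hω (n+1) hn1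
    by_cases hA : ω ∈ A
    · -- on A n
      have hlt : S n ω < (τ:ℤ) := S_lt_good hτ hS0 hS hω n hA
      have hmin : min (S n ω) (τ:ℤ) = S n ω := min_eq_left hlt.le
      have hRn : Rst S τ n ω = S n ω := by rw [Rst, if_pos hA, hmin]
      have hs0 : 0 ≤ S n ω := S_nonneg hS0 hS n ω
      have hmω : m ω = ((S n ω : ℤ) : ℝ) := by rw [hmdef]; simp [hmin]
      rcases hε with h1 | h1
      · -- step up
        have hYpω : Yp ω = 1 := by
          rw [hYp]; exact Set.indicator_of_mem (by simp [hBp, h1]) _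
        have hYmω : Ym ω = 0 := by
          rw [hYm]; exact Set.indicator_of_notMem (by simp [hBm, h1]) _
        have hS1 : S (n+1) ω = S n ω + 1 := by
          rw [hS n ω, h1]; exact max_eq_right (by omega)
        have hR1 : Rst S τ (n+1) ω = S n ω + 1 := by
          by_cases hA1 : ω ∈ Aset S τ (n+1)
          · have : S (n+1) ω < (τ:ℤ) := S_lt_good hτ hS0 hS hω (n+1) hA1
            rw [Rst, if_pos hA1, hS1, min_eq_left (by omega)]
          · have hSeq : S (n+1) ω = (τ:ℤ) := by
              by_contra hne
              exact hA1 (fun k hk1 hk2 => by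
                rcases Nat.lt_or_ge k (n+1) with h | h
                · exact hA k hk1 (Nat.lt_succ_iff.mp h)
                · have : k = n+1 := le_antisymm hk2 h
                  rw [this]; exact hne)
            rw [Rst, if_neg hA1, ← hSeq, hS1]
        rw [Fst, Fst, hR1, hRn, hXp, Set.indicator_of_mem hA, hYpω, hXm,
          Set.indicator_of_mem hA, hYmω, hmω]
        push_cast
        ring
      · -- step down
        have hYpω : Yp ω = 0 := by
          rw [hYp]; exact Set.indicator_of_notMem (by simp [hBp, h1]) _
        have hYmω : Ym ω = 1 := by
          rw [hYm]; exact Set.indicator_of_mem (by simp [hBm, h1]) _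
        have hS1 : S (n+1) ω = max 0 (S n ω - 1) := by rw [hS n ω, h1]; ring_nf
        have hA1 : ω ∈ Aset S τ (n+1) := by
          intro k hk1 hk2
          rcases Nat.lt_or_ge k (n+1) with h | h
          · exact hA k hk1 (Nat.lt_succ_iff.mp h)
          · have : k = n+1 := le_antisymm hk2 h
            rw [this, hS1]
            have : max 0 (S n ω - 1) ≤ S n ω := by omega
            omega
        have hR1 : Rst S τ (n+1) ω = max 0 (S n ω - 1) := by
          rw [Rst, if_pos hA1, hS1, min_eq_left (by omega)]
        rw [Fst, Fst, hR1, hRn, hXp, Set.indicator_of_mem hA, hYpω, hXm,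
          Set.indicator_of_mem hA, hYmω, hmω]
        rcases le_or_gt (S n ω) 0 with h0 | h0
        · have hs : S n ω = 0 := le_antisymm h0 hs0
          rw [hs]; norm_num
        · rw [max_eq_right (by omega)]
          push_cast
          ring
    · -- off A n
      have hA1 : ω ∉ Aset S τ (n+1) := fun h =>
        hA (fun k hk1 hk2 => h k hk1 (hk2.trans (Nat.le_succ n)))
      rw [Fst, Fst, Rst, Rst, if_neg hA, if_neg hA1, hXp, Set.indicator_of_notMem hA,
        hXm, Set.indicator_of_notMem hA]
      ring
  -- measurability (global)
  have hAm : MeasurableSet A := Aset_meas hmeas hS0 hS n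
  have hmm : Measurable m :=
    measurable_from_top.comp ((S_meas hmeas hS0 hS n).min measurable_const)
  have hXpm : Measurable Xp := ((measurable_const.mul hmm).add measurable_const).indicator hAm
  have hXmm : Measurable Xm := (measurable_const.mul hmm).indicator hAm
  have hBpm : MeasurableSet Bp := hmeas (n+1) (measurableSet_singleton 1)
  have hBmm : MeasurableSet Bm := hmeas (n+1) (measurableSet_singleton (-1))
  have hYpm : Measurable Yp := measurable_const.indicator hBpm
  have hYmm : Measurable Ym := measurable_const.indicator hBmm
  -- bounds
  have hτ0 : (0:ℝ) ≤ (τ:ℝ) := Nat.cast_nonneg τ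
  have hm0 : ∀ ω, (0:ℝ) ≤ m ω ∧ m ω ≤ (τ:ℝ) := fun ω => by
    have h1 : (0:ℤ) ≤ min (S n ω) (τ:ℤ) :=
      le_min (S_nonneg hS0 hS n ω) (by positivity)
    have h2 : min (S n ω) (τ:ℤ) ≤ (τ:ℤ) := min_le_right _ _
    simp only [hmdef]
    exact ⟨by exact_mod_cast h1, by exact_mod_cast h2⟩
  have habsind : ∀ (s : Set Ω) (g : Ω → ℝ) (C : ℝ), 0 ≤ C → (∀ ω, |g ω| ≤ C) →
      ∀ ω, |s.indicator g ω| ≤ C := by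
    intro s g C hC hg ω
    by_cases h : ω ∈ s
    · rw [Set.indicator_of_mem h]; exact hg ω
    · rw [Set.indicator_of_notMem h]; simpa using hC
  have hXpbd : ∀ ω, |Xp ω| ≤ 2*(τ:ℝ)+2 := by
    refine habsind _ _ _ (by linarith) fun ω => abs_le.mpr ?_
    obtain ⟨h1, h2⟩ := hm0 ω; constructor <;> linarith
  have hXmbd : ∀ ω, |Xm ω| ≤ 2*(τ:ℝ)+2 := by
    refine habsind _ _ _ (by linarith) fun ω => abs_le.mpr ?_
    obtain ⟨h1, h2⟩ := hm0 ω; constructor <;> linarith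
  have hYpbd : ∀ ω, |Yp ω| ≤ 1 :=
    habsind _ _ _ zero_le_one fun ω => by norm_num
  have hYmbd : ∀ ω, |Ym ω| ≤ 1 :=
    habsind _ _ _ zero_le_one fun ω => by norm_num
  have hXpi : Integrable Xp ℙ := integrable_of_bdd hXpm hXpbd
  have hXmi : Integrable Xm ℙ := integrable_of_bdd hXmm hXmbd
  have hYpi : Integrable Yp ℙ := integrable_of_bdd hYpm hYpbd
  have hYmi : Integrable Ym ℙ := integrable_of_bdd hYmm hYmbd
  have hprodbd : ∀ (f g : Ω → ℝ), (∀ ω, |f ω| ≤ 2*(τ:ℝ)+2) → (∀ ω, |g ω| ≤ 1) →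
      ∀ ω, |f ω * g ω| ≤ 2*(τ:ℝ)+2 := fun f g hf hg ω => by
    rw [abs_mul]
    calc |f ω| * |g ω| ≤ (2*(τ:ℝ)+2) * 1 :=
          mul_le_mul (hf ω) (hg ω) (abs_nonneg _) (by linarith)
      _ = 2*(τ:ℝ)+2 := mul_one _
  have hXYpi : Integrable (fun ω => Xp ω * Yp ω) ℙ :=
    integrable_of_bdd (hXpm.mul hYpm) (hprodbd _ _ hXpbd hYpbd)
  have hXYmi : Integrable (fun ω => Xm ω * Ym ω) ℙ :=
    integrable_of_bdd (hXmm.mul hYmm) (hprodbd _ _ hXmbd hYmbd)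
  -- independence
  have hmG : Measurable[Gsig ε n] m :=
    measurable_from_top.comp ((S_meas_G hS0 hS n n le_rfl).min measurable_const)
  have hAG : MeasurableSet[Gsig ε n] A := Aset_meas_G hS0 hS n
  have hXpG : Measurable[Gsig ε n] Xp :=
    ((measurable_const.mul hmG).add measurable_const).indicator hAG
  have hXmG : Measurable[Gsig ε n] Xm := (measurable_const.mul hmG).indicator hAG
  have hBpc : MeasurableSet[MeasurableSpace.comap (ε (n+1)) inferInstance] Bp :=
    ⟨{1}, trivial, rfl⟩
  have hBmc : MeasurableSet[MeasurableSpace.comap (ε (n+1)) inferInstance] Bm :=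
    ⟨{-1}, trivial, rfl⟩
  have hYpC : Measurable[MeasurableSpace.comap (ε (n+1)) inferInstance] Yp :=
    measurable_const.indicator hBpc
  have hYmC : Measurable[MeasurableSpace.comap (ε (n+1)) inferInstance] Ym :=
    measurable_const.indicator hBmc
  have hIndep := indep_G hmeas hindep n
  have hIp : IndepFun Xp Yp ℙ := by
    rw [IndepFun_iff_Indep]
    exact indep_of_indep_of_le_left
      (indep_of_indep_of_le_right hIndep hYpC.comap_le) hXpG.comap_le
  have hIm : IndepFun Xm Ym ℙ := by
    rw [IndepFun_iff_Indep]
    exact indep_of_indep_of_le_left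
      (indep_of_indep_of_le_right hIndep hYmC.comap_le) hXmG.comap_le
  -- integrals of indicators
  have hPBp : ℙ Bp = ENNReal.ofReal (1/2) := by
    have h : Bp = {ω | ε (n+1) ω = 1} := by ext ω; simp [hBp]
    rw [h]; exact hup (n+1) hn1
  have hPBm : ℙ Bm = ENNReal.ofReal (1/2) := by
    have h : Bm = {ω | ε (n+1) ω = -1} := by ext ω; simp [hBm]
    rw [h]; exact hdown (n+1) hn1
  have hYpint : ∫ ω, Yp ω ∂ℙ = 1/2 := by
    rw [hYp, integral_indicator_const (1:ℝ) hBpm, measureReal_def, hPBp, ENNReal.toReal_ofReal (by norm_num)]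
    norm_num
  have hYmint : ∫ ω, Ym ω ∂ℙ = 1/2 := by
    rw [hYm, integral_indicator_const (1:ℝ) hBmm, measureReal_def, hPBm, ENNReal.toReal_ofReal (by norm_num)]
    norm_num
  -- integrability of Fst
  have hFm := Fst_meas (τ := τ) hmeas hS0 hS
  have hFbd := Fst_bdd (τ := τ) hS0 hS
  have hFi := Fst_int (τ := τ) hmeas hS0 hS
  -- a.e. identity
  have haegood : ∀ᵐ ω ∂ℙ, ω ∈ goodE ε :=
    mem_ae_iff.mpr (goodE_null hmeas hup hdown)
  have hcongr : ∫ ω, (Fst S τ (n+1) ω - Fst S τ n ω) ∂ℙ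
      = ∫ ω, (Xp ω * Yp ω + Xm ω * Ym ω) ∂ℙ :=
    integral_congr_ae (by filter_upwards [haegood] with ω hω using hptwise ω hω)
  -- sum of X's
  have hXsum : (fun ω => Xp ω + Xm ω) = A.indicator (fun _ => (2:ℝ)) := by
    funext ω
    rw [hXp, hXm]
    by_cases h : ω ∈ A
    · rw [Set.indicator_of_mem h, Set.indicator_of_mem h, Set.indicator_of_mem h]; ring
    · rw [Set.indicator_of_notMem h, Set.indicator_of_notMem h,
        Set.indicator_of_notMem h]; ring
  have hXint : ∫ ω, Xp ω ∂ℙ + ∫ ω, Xm ω ∂ℙ = 2 * (ℙ A).toReal := by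
    rw [← integral_add hXpi hXmi]
    have := integral_indicator_const (2:ℝ) hAm (μ := (ℙ : Measure Ω))
    rw [show (fun ω => Xp ω + Xm ω) = A.indicator (fun _ => (2:ℝ)) from hXsum]
    rw [this]; rw [smul_eq_mul, measureReal_def]; ring
  -- put it together
  have hmain : ∫ ω, Fst S τ (n+1) ω ∂ℙ - ∫ ω, Fst S τ n ω ∂ℙ = (ℙ A).toReal := by
    rw [← integral_sub (hFi (n+1)) (hFi n), hcongr,
      integral_add hXYpi hXYmi,
      show (fun ω => Xp ω * Yp ω) = Xp * Yp from rfl,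
      show (fun ω => Xm ω * Ym ω) = Xm * Ym from rfl,
      hIp.integral_mul_eq_mul_integral hXpi.1 hYpi.1,
      hIm.integral_mul_eq_mul_integral hXmi.1 hYmi.1,
      hYpint, hYmint]
    have h2 := hXint
    linarith
  linarith [hmain]


end Main

/-- For the reflected random walk `S₀ = 0`, `S_k = max (0, S_{k-1} + ε_k)` driven by
i.i.d. symmetric signs (`P(ε_k = 1) = P(ε_k = −1) = 1/2`), the hitting time
`T = inf {k ≥ 1 : S_k = τ}` is integrable with `E[T] = τ (τ + 1)`. -/
theorem cusign_ARL_symmetric {Ω : Type*} [MeasureSpace Ω]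
    [IsProbabilityMeasure (ℙ : Measure Ω)]
    (ε : ℕ → Ω → ℤ) (hmeas : ∀ k, Measurable (ε k))
    (hindep : iIndepFun ε ℙ)
    (hup : ∀ k, 1 ≤ k → ℙ {ω | ε k ω = 1} = ENNReal.ofReal (1/2))
    (hdown : ∀ k, 1 ≤ k → ℙ {ω | ε k ω = -1} = ENNReal.ofReal (1/2))
    (τ : ℕ) (hτ : 1 ≤ τ)
    (S : ℕ → Ω → ℤ) (hS0 : ∀ ω, S 0 ω = 0)
    (hS : ∀ k ω, S (k + 1) ω = max 0 (S k ω + ε (k + 1) ω))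
    (T : Ω → ℕ∞)
    (hT : ∀ ω, T ω = ⨅ (k : ℕ) (_ : 1 ≤ k ∧ S k ω = (τ : ℤ)), (k : ℕ∞)) :
    (∫⁻ ω, (T ω : ℝ≥0∞) ∂ℙ ≠ ⊤) ∧
    (∫⁻ ω, (T ω : ℝ≥0∞) ∂ℙ).toReal = (τ : ℝ) * (τ + 1) := by
  classical
  have hC0 : (0:ℝ) ≤ (τ:ℝ)*((τ:ℝ)+1) := by positivity
  have hF0 : ∀ ω, Fst S τ 0 ω = 0 := by
    intro ω
    have hA0 : ω ∈ Aset S τ 0 := fun k hk1 hk0 => absurd (hk1.trans hk0) (by omega)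
    rw [Fst, Rst, if_pos hA0, hS0 ω, min_eq_left (by positivity)]
    norm_num
  have hFm := Fst_meas (τ := τ) hmeas hS0 hS
  have hFbd := Fst_bdd (τ := τ) hS0 hS
  have hFi := Fst_int (τ := τ) hmeas hS0 hS
  have hAm : ∀ n, MeasurableSet (Aset S τ n) := Aset_meas (τ := τ) hmeas hS0 hS
  have hcum : ∀ n, ∫ ω, Fst S τ n ω ∂ℙ = ∑ j ∈ Finset.range n, (ℙ (Aset S τ j)).toReal := by
    intro n
    induction n with
    | zero => simp [hF0]
    | succ k ih =>
      rw [key_step hmeas hindep hup hdown hτ hS0 hS k, ih, Finset.sum_range_succ]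
  have hbd : ∀ n, ∑ j ∈ Finset.range n, (ℙ (Aset S τ j)).toReal ≤ (τ:ℝ)*((τ:ℝ)+1) := by
    intro n
    rw [← hcum n]
    calc ∫ ω, Fst S τ n ω ∂ℙ ≤ ∫ _ω, (τ:ℝ)*((τ:ℝ)+1) ∂ℙ :=
          integral_mono (hFi n) (integrable_const _) fun ω => (hFbd n ω).2
      _ = (τ:ℝ)*((τ:ℝ)+1) := by simp
  have hTA : ∀ (n : ℕ) (ω : Ω), ((n:ℕ∞) < T ω) ↔ ω ∈ Aset S τ n := by
    intro n ω
    rw [hT ω]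
    constructor
    · intro h k hk1 hk2 heq
      have hle : (⨅ (k : ℕ) (_ : 1 ≤ k ∧ S k ω = (τ:ℤ)), (k:ℕ∞)) ≤ (k:ℕ∞) :=
        iInf_le_of_le k (iInf_le_of_le ⟨hk1, heq⟩ le_rfl)
      have hkn : (k:ℕ∞) ≤ (n:ℕ∞) := by exact_mod_cast hk2
      exact absurd (lt_of_lt_of_le h (hle.trans hkn)) (lt_irrefl _)
    · intro hA
      refine lt_of_lt_of_le
        (show (n:ℕ∞) < ((n+1:ℕ):ℕ∞) by exact_mod_cast Nat.lt_succ_self n) ?_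
      refine le_iInf fun k => le_iInf fun hk => ?_
      have hnk : n + 1 ≤ k := by
        by_contra hlt
        push_neg at hlt
        exact hA k hk.1 (by omega) hk.2
      exact_mod_cast hnk
  have hlin : ∫⁻ ω, (T ω : ℝ≥0∞) ∂ℙ = ∑' n, ℙ (Aset S τ n) := by
    have h1 : ∀ ω, (T ω : ℝ≥0∞) = ∑' n : ℕ, (Aset S τ n).indicator (fun _ => (1:ℝ≥0∞)) ω := by
      intro ω
      rw [enat_cast_eq_tsum']
      exact tsum_congr fun n => by
        rw [Set.indicator_apply]
        exact if_congr (hTA n ω) rfl rfl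
    calc ∫⁻ ω, (T ω : ℝ≥0∞) ∂ℙ
        = ∫⁻ ω, ∑' n : ℕ, (Aset S τ n).indicator (fun _ => (1:ℝ≥0∞)) ω ∂ℙ := lintegral_congr h1
      _ = ∑' n : ℕ, ∫⁻ ω, (Aset S τ n).indicator (fun _ => (1:ℝ≥0∞)) ω ∂ℙ :=
          lintegral_tsum fun n => (measurable_const.indicator (hAm n)).aemeasurable
      _ = ∑' n, ℙ (Aset S τ n) := tsum_congr fun n => by
          simp [lintegral_indicator (μ := (ℙ : Measure Ω)) (hAm n)]
  have hpart : ∀ n, ∑ j ∈ Finset.range n, ℙ (Aset S τ j)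
      ≤ ENNReal.ofReal ((τ:ℝ)*((τ:ℝ)+1)) := by
    intro n
    have h1 : ∑ j ∈ Finset.range n, ℙ (Aset S τ j)
        = ENNReal.ofReal (∑ j ∈ Finset.range n, (ℙ (Aset S τ j)).toReal) := by
      rw [ENNReal.ofReal_sum_of_nonneg (fun i _ => ENNReal.toReal_nonneg)]
      exact Finset.sum_congr rfl fun j _ => (ENNReal.ofReal_toReal (measure_ne_top _ _)).symm
    rw [h1]
    exact ENNReal.ofReal_le_ofReal (hbd n)
  have hne : ∑' n, ℙ (Aset S τ n) ≠ ⊤ :=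
    ne_top_of_le_ne_top ENNReal.ofReal_ne_top (ENNReal.tsum_le_of_sum_range_le hpart)
  refine ⟨by rw [hlin]; exact hne, ?_⟩
  have hto0 : Filter.Tendsto (fun n => ℙ (Aset S τ n)) Filter.atTop (nhds 0) :=
    ENNReal.tendsto_atTop_zero_of_tsum_ne_top hne
  have hinter : ℙ (⋂ n, Aset S τ n) = 0 :=
    le_antisymm (ge_of_tendsto' hto0 fun n => measure_mono (Set.iInter_subset _ n)) (by positivity)
  have haeesc : ∀ᵐ ω ∂ℙ, ω ∉ ⋂ n, Aset S τ n := by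
    rw [ae_iff]
    convert hinter using 2
    ext ω; simp
  have hlimae : ∀ᵐ ω ∂ℙ, Filter.Tendsto (fun n => Fst S τ n ω) Filter.atTop
      (nhds ((τ:ℝ)*((τ:ℝ)+1))) := by
    filter_upwards [haeesc] with ω hω
    rw [Set.mem_iInter] at hω
    push_neg at hω
    obtain ⟨N, hN⟩ := hω
    refine tendsto_atTop_of_eventually_const (i₀ := N) fun n hn => ?_
    have hnot : ω ∉ Aset S τ n := fun h => hN (Aset_antitone hn h)
    rw [Fst, Rst, if_neg hnot]
    push_cast
    ring
  have hDCT : Filter.Tendsto (fun n => ∫ ω, Fst S τ n ω ∂ℙ) Filter.atTop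
      (nhds ((τ:ℝ)*((τ:ℝ)+1))) := by
    have h := tendsto_integral_of_dominated_convergence (μ := (ℙ : Measure Ω))
      (F := fun n ω => Fst S τ n ω) (f := fun _ => (τ:ℝ)*((τ:ℝ)+1))
      (fun _ => (τ:ℝ)*((τ:ℝ)+1)) (fun n => (hFm n).aestronglyMeasurable)
      (integrable_const _)
      (fun n => ae_of_all _ fun ω => by
        show |Fst S τ n ω| ≤ (τ:ℝ)*((τ:ℝ)+1)
        rw [abs_le]
        exact ⟨by linarith [(hFbd n ω).1], (hFbd n ω).2⟩)
      hlimae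
    simpa using h
  have hsummable : Summable (fun n => (ℙ (Aset S τ n)).toReal) :=
    summable_of_sum_range_le (fun n => ENNReal.toReal_nonneg) hbd
  have hts := hsummable.hasSum.tendsto_sum_nat
  have heq2 : (fun n => ∑ j ∈ Finset.range n, (ℙ (Aset S τ j)).toReal)
      = fun n => ∫ ω, Fst S τ n ω ∂ℙ := funext fun n => (hcum n).symm
  rw [heq2] at hts
  have hval : ∑' n, (ℙ (Aset S τ n)).toReal = (τ:ℝ)*((τ:ℝ)+1) :=
    tendsto_nhds_unique hts hDCT
  rw [hlin, ENNReal.tsum_toReal_eq (fun n => measure_ne_top _ _), hval]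
end

section
/- Let ℓ ∈ ℕ with ℓ ≥ 1, let p ∈ [0,1], and on a probability space let (ζ_k)_{k≥1} be i.i.d. {0,1}-valued random variables with P(ζ_k = 1) = p. Define the Memoryless Run-time Estimator α̂_0 = 0, α̂_k = α̂_{k−1} + (ζ_k − α̂_{k−1})/ℓ. Then for every k ≥ 1, Var[α̂_k] = p(1−p)·(1 − (1 − 1/ℓ)^{2k})/(2ℓ − 1); in particular lim_{k→∞} Var[α̂_k] = p(1−p)/(2ℓ−1) = θ·p(1−p)/ℓ with θ = ℓ/(2ℓ−1), which is the scaling value reported for threshold τ = 1. -/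
open MeasureTheory ProbabilityTheory Filter Finset

lemma bern_var {Ω : Type*} [MeasureSpace Ω] [IsProbabilityMeasure (ℙ : Measure Ω)]
    (p : ℝ) (hp0 : 0 ≤ p) (X : Ω → ℝ) (hX : Measurable X)
    (h01 : ∀ ω, X ω = 0 ∨ X ω = 1) (hp : ℙ {ω | X ω = 1} = ENNReal.ofReal p) :
    variance X ℙ = p * (1 - p) := by
  have hbd : ∀ᵐ ω ∂(ℙ : Measure Ω), X ω ∈ Set.Icc (0 : ℝ) 1 := by
    filter_upwards with ω
    rcases h01 ω with h | h <;> simp [h]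
  have hmem : MemLp X 2 ℙ := memLp_of_bounded hbd hX.aestronglyMeasurable 2
  have hind : X = Set.indicator {ω | X ω = 1} (fun _ => (1 : ℝ)) := by
    funext ω
    rcases h01 ω with h | h
    · rw [h, Set.indicator_of_notMem]
      simp [Set.mem_setOf_eq, h]
    · rw [h, Set.indicator_of_mem]
      exact h
  have hms : MeasurableSet {ω | X ω = 1} := hX (measurableSet_singleton 1)
  have hint : ∫ ω, X ω ∂ℙ = p := by
    rw [show (fun ω => X ω) = X from rfl, hind, integral_indicator_const _ hms, measureReal_def, hp]
    simp [ENNReal.toReal_ofReal hp0]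
  have hsq : (fun ω => X ω ^ 2) = X := by
    funext ω; rcases h01 ω with h | h <;> simp [h]
  rw [variance_eq_sub hmem]
  simp only [Pi.pow_apply]
  rw [hsq, hint]
  ring

/-- Variance of the Memoryless Run-time Estimator driven by i.i.d. Bernoulli(p) alarms:
`Var[α̂_k] = p (1 − p) (1 − (1 − 1/ℓ)^{2k}) / (2ℓ − 1)` for all `k ≥ 1`; in particular
`Var[α̂_k] → p(1−p)/(2ℓ−1) = θ p(1−p)/ℓ` with `θ = ℓ/(2ℓ−1)` (the scaling of `τ = 1`). -/
theorem mre_variance {Ω : Type*} [MeasureSpace Ω] [IsProbabilityMeasure (ℙ : Measure Ω)]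
    (ℓ : ℕ) (hℓ : 1 ≤ ℓ) (p : ℝ) (hp0 : 0 ≤ p) (hp1 : p ≤ 1)
    (ζ : ℕ → Ω → ℝ) (hmeas : ∀ k, Measurable (ζ k))
    (hindep : iIndepFun ζ ℙ)
    (h01 : ∀ k ω, ζ k ω = 0 ∨ ζ k ω = 1)
    (hprob : ∀ k, 1 ≤ k → ℙ {ω | ζ k ω = 1} = ENNReal.ofReal p)
    (a : ℕ → Ω → ℝ) (h0 : ∀ ω, a 0 ω = 0)
    (hrec : ∀ (k : ℕ) (ω : Ω),
      a (k + 1) ω = a k ω + (ζ (k + 1) ω - a k ω) / (ℓ : ℝ)) :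
    (∀ k : ℕ, 1 ≤ k → variance (a k) ℙ
        = p * (1 - p) * (1 - (1 - 1 / (ℓ : ℝ)) ^ (2 * k)) / (2 * (ℓ : ℝ) - 1)) ∧
    Tendsto (fun k : ℕ => variance (a k) ℙ) atTop
      (nhds (p * (1 - p) / (2 * (ℓ : ℝ) - 1))) ∧
    p * (1 - p) / (2 * (ℓ : ℝ) - 1)
      = ((ℓ : ℝ) / (2 * (ℓ : ℝ) - 1)) * (p * (1 - p)) / (ℓ : ℝ) := by
  have hℓR : (1 : ℝ) ≤ (ℓ : ℝ) := by exact_mod_cast hℓ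
  have hℓ0 : (ℓ : ℝ) ≠ 0 := by linarith
  have hden : 2 * (ℓ : ℝ) - 1 ≠ 0 := by linarith
  set r : ℝ := 1 - 1 / (ℓ : ℝ) with hr
  have hr0 : 0 ≤ r := by
    have h : 1 / (ℓ : ℝ) ≤ 1 := by
      rw [div_le_one (by linarith)]; exact hℓR
    rw [hr]; linarith
  have hr1 : r < 1 := by
    have : 0 < 1 / (ℓ : ℝ) := by positivity
    simp only [hr]; linarith
  -- coefficient function
  set c : ℕ → ℕ → ℝ := fun k i => r ^ (k - 1 - i) / (ℓ : ℝ) with hc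
  -- representation of a k as a sum
  have hrep : ∀ k ω, a k ω = ∑ i ∈ range k, c k i * ζ (i + 1) ω := by
    intro k
    induction k with
    | zero => intro ω; simp [h0]
    | succ n ih =>
      intro ω
      rw [hrec n ω, ih ω, Finset.sum_range_succ]
      have h1 : ∀ i ∈ range n, c (n+1) i * ζ (i+1) ω = r * (c n i * ζ (i+1) ω) := by
        intro i hi
        simp only [Finset.mem_range] at hi
        have : n + 1 - 1 - i = (n - 1 - i) + 1 := by omega
        simp only [hc, this, pow_succ]
        ring
      rw [Finset.sum_congr rfl h1, ← Finset.mul_sum]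
      have : c (n+1) n = 1 / (ℓ : ℝ) := by
        simp [hc, Nat.sub_self]
      rw [this, hr]
      have halg : ∀ S z : ℝ, S + (z - S) / (ℓ:ℝ) = (1 - 1/(ℓ:ℝ)) * S + 1/(ℓ:ℝ) * z := by
        intro S z
        field_simp
        ring
      exact halg _ _
  -- variance of each term
  have hvarterm : ∀ (k i : ℕ), variance (fun ω => c k i * ζ (i + 1) ω) ℙ
      = (c k i) ^ 2 * (p * (1 - p)) := by
    intro k i
    have := variance_smul (c k i) (ζ (i + 1)) (ℙ : Measure Ω)
    have heq : (c k i • ζ (i + 1)) = fun ω => c k i * ζ (i + 1) ω := rfl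
    rw [heq] at this
    rw [this, bern_var p hp0 (ζ (i+1)) (hmeas _) (h01 _) (hprob _ (by omega))]
  -- MemLp of terms
  have hmem : ∀ (k i : ℕ), MemLp (fun ω => c k i * ζ (i + 1) ω) 2 (ℙ : Measure Ω) := by
    intro k i
    have hbd : ∀ᵐ ω ∂(ℙ : Measure Ω), ζ (i+1) ω ∈ Set.Icc (0 : ℝ) 1 := by
      filter_upwards with ω
      rcases h01 (i+1) ω with h | h <;> simp [h]
    exact (memLp_of_bounded hbd (hmeas _).aestronglyMeasurable 2).const_mul _
  -- pairwise independence
  have hpind : ∀ k : ℕ, Set.Pairwise ↑(range k)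
      (fun i j => IndepFun (fun ω => c k i * ζ (i + 1) ω) (fun ω => c k j * ζ (j + 1) ω) ℙ) := by
    intro k i _ j _ hij
    have hbase : IndepFun (ζ (i+1)) (ζ (j+1)) ℙ := hindep.indepFun (by omega)
    exact hbase.comp (measurable_const_mul (c k i)) (measurable_const_mul (c k j))
  -- key variance formula
  have key : ∀ k : ℕ, variance (a k) ℙ
      = p * (1 - p) * (1 - r ^ (2 * k)) / (2 * (ℓ : ℝ) - 1) := by
    intro k
    have ha : a k = ∑ i ∈ range k, (fun ω => c k i * ζ (i + 1) ω) := by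
      funext ω
      rw [hrep k ω]
      simp
    rw [ha, IndepFun.variance_sum (fun i _ => hmem k i) (hpind k)]
    have hsum : ∑ i ∈ range k, variance (fun ω => c k i * ζ (i + 1) ω) ℙ
        = (∑ i ∈ range k, (c k i)^2) * (p * (1-p)) := by
      rw [Finset.sum_mul]
      exact Finset.sum_congr rfl fun i _ => hvarterm k i
    rw [hsum]
    -- geometric sum
    have hgeom : ∑ i ∈ range k, (c k i)^2 = (1 - r^(2*k)) / (2 * (ℓ:ℝ) - 1) := by
      have hre : ∀ i ∈ range k, (c k i)^2 = (r^2)^(k - 1 - i) / (ℓ:ℝ)^2 := by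
        intro i _
        simp only [hc, div_pow, ← pow_mul, Nat.mul_comm]
      rw [Finset.sum_congr rfl hre]
      rw [← Finset.sum_div]
      have hrefl : ∑ i ∈ range k, (r^2)^(k - 1 - i) = ∑ i ∈ range k, (r^2)^i :=
        Finset.sum_range_reflect (fun i => (r^2)^i) k
      rw [hrefl, geom_sum_eq (by nlinarith : r^2 ≠ 1)]
      have h2 : (1 - r^2) * (ℓ:ℝ)^2 = 2 * (ℓ:ℝ) - 1 := by
        rw [hr]; field_simp; ring
      have hq : r^2 - 1 ≠ 0 := by nlinarith
      rw [show (r ^ 2) ^ k = r ^ (2 * k) from (pow_mul r 2 k).symm, div_div,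
        div_eq_div_iff (mul_ne_zero hq (by positivity)) hden]
      linear_combination (1 - r^(2*k)) * h2
    rw [hgeom]
    ring
  refine ⟨fun k _ => key k, ?_, ?_⟩
  · have hlim : Tendsto (fun k : ℕ => r ^ (2 * k)) atTop (nhds 0) := by
      have : (fun k : ℕ => r ^ (2 * k)) = fun k : ℕ => (r^2) ^ k := by
        funext k; rw [← pow_mul]
      rw [this]
      exact tendsto_pow_atTop_nhds_zero_of_lt_one (by positivity) (by nlinarith)
    have : Tendsto (fun k : ℕ => p * (1 - p) * (1 - r ^ (2*k)) / (2 * (ℓ:ℝ) - 1)) atTop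
        (nhds (p * (1 - p) * (1 - 0) / (2 * (ℓ:ℝ) - 1))) := by
      apply Tendsto.div_const
      exact (tendsto_const_nhds.sub hlim).const_mul _
    simp only [sub_zero, mul_one] at this
    convert this using 1
    funext k
    exact key k
  · field_simp
end
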